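/- Sum bound with momentum numerator (Lemma 4). Let 0 ≤ β₁ < 1, 0 ≤ β₂ < 1, ε > 0, and let a_1, …, a_T be real numbers. Define c_t = Σ_{τ=1}^t β₁^{t−τ}·a_τ and b_t = Σ_{τ=1}^t Σ_{j=1}^τ β₂^{τ−j}·a_j². Then Σ_{t=1}^T c_t²/(ε + b_t) ≤ (1/(1−β₁)²) · ln(1 + b_T/ε). -/

import Mathlib

private lemma geom_aux (r : ℝ) (h0 : 0 ≤ r) (h1 : r < 1) (n : ℕ) :
    ∑ k ∈ Finset.range n, r ^ k ≤ 1 / (1 - r) := by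
  have h : (0:ℝ) < 1 - r := by linarith
  rw [le_div_iff₀ h]
  have := geom_sum_mul r n
  have hrn : 0 ≤ r ^ n := pow_nonneg h0 n
  nlinarith [this]

private lemma sum_pow_sub_left (r : ℝ) (h0 : 0 ≤ r) (h1 : r < 1) (m t : ℕ) :
    ∑ τ ∈ Finset.Icc m t, r ^ (t - τ) ≤ 1 / (1 - r) := by
  have he : ∑ τ ∈ Finset.Icc m t, r ^ (t - τ)
      = ∑ k ∈ Finset.range (t + 1 - m), r ^ k := by
    refine Finset.sum_nbij' (fun τ => t - τ) (fun k => t - k) ?_ ?_ ?_ ?_ ?_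
    · intro τ hτ; simp only [Finset.mem_Icc] at hτ; simp only [Finset.mem_range]; omega
    · intro k hk; simp only [Finset.mem_range] at hk; simp only [Finset.mem_Icc]; omega
    · intro τ hτ; simp only [Finset.mem_Icc] at hτ; omega
    · intro k hk; simp only [Finset.mem_range] at hk; omega
    · intro τ hτ; rfl
  rw [he]; exact geom_aux r h0 h1 _

private lemma sum_pow_sub_right (r : ℝ) (h0 : 0 ≤ r) (h1 : r < 1) (m T : ℕ) :
    ∑ t ∈ Finset.Icc m T, r ^ (t - m) ≤ 1 / (1 - r) := by
  have he : ∑ t ∈ Finset.Icc m T, r ^ (t - m)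
      = ∑ k ∈ Finset.range (T + 1 - m), r ^ k := by
    refine Finset.sum_nbij' (fun t => t - m) (fun k => k + m) ?_ ?_ ?_ ?_ ?_
    · intro t ht; simp only [Finset.mem_Icc] at ht; simp only [Finset.mem_range]; omega
    · intro k hk; simp only [Finset.mem_range] at hk; simp only [Finset.mem_Icc]; omega
    · intro t ht; simp only [Finset.mem_Icc] at ht; omega
    · intro k hk; simp only [Finset.mem_range] at hk; omega
    · intro t ht; rfl
  rw [he]; exact geom_aux r h0 h1 _

private lemma sum_Icc_Icc_comm' {M : Type*} [AddCommMonoid M] (T : ℕ) (f : ℕ → ℕ → M) :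
    ∑ t ∈ Finset.Icc 1 T, ∑ τ ∈ Finset.Icc 1 t, f t τ =
      ∑ τ ∈ Finset.Icc 1 T, ∑ t ∈ Finset.Icc τ T, f t τ := by
  rw [Finset.sum_sigma', Finset.sum_sigma']
  refine Finset.sum_nbij' (fun x => ⟨x.2, x.1⟩) (fun x => ⟨x.2, x.1⟩) ?_ ?_
    (fun _ _ => rfl) (fun _ _ => rfl) (fun _ _ => rfl) <;>
  · simp only [Finset.mem_sigma, Finset.mem_Icc, Sigma.forall]
    omega

/-- Lemma 4: sum bound with momentum numerator. -/
theorem sum_bound_momentum (β₁ β₂ ε : ℝ) (hβ₁0 : 0 ≤ β₁) (hβ₁1 : β₁ < 1)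
    (hβ₂0 : 0 ≤ β₂) (hβ₂1 : β₂ < 1) (hε : 0 < ε) (T : ℕ) (a : ℕ → ℝ)
    (c b : ℕ → ℝ)
    (hc : ∀ t, c t = ∑ τ ∈ Finset.Icc 1 t, β₁ ^ (t - τ) * a τ)
    (hb : ∀ t, b t = ∑ τ ∈ Finset.Icc 1 t, ∑ j ∈ Finset.Icc 1 τ, β₂ ^ (τ - j) * (a j) ^ 2) :
    ∑ t ∈ Finset.Icc 1 T, (c t) ^ 2 / (ε + b t) ≤
      (1 / (1 - β₁) ^ 2) * Real.log (1 + b T / ε) := by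
  have h1β : (0:ℝ) < 1 - β₁ := by linarith
  -- b is a sum of nonnegative terms, nondecreasing
  have hterm : ∀ τ j : ℕ, 0 ≤ β₂ ^ (τ - j) * (a j) ^ 2 := fun τ j =>
    mul_nonneg (pow_nonneg hβ₂0 _) (sq_nonneg _)
  have hbmono : ∀ s t : ℕ, s ≤ t → b s ≤ b t := by
    intro s t hst
    rw [hb s, hb t]
    refine Finset.sum_le_sum_of_subset_of_nonneg
      (Finset.Icc_subset_Icc_right hst) ?_
    intro i _ _
    exact Finset.sum_nonneg fun j _ => hterm i j
  have hb0 : b 0 = 0 := by rw [hb 0]; simp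
  have hbnn : ∀ t, 0 ≤ b t := fun t => hb0 ▸ hbmono 0 t (Nat.zero_le t)
  have hpos : ∀ t, 0 < ε + b t := fun t => by have := hbnn t; linarith
  -- Step E : the basic sum bound for a_τ² / (ε + b τ)
  have stepE : ∑ τ ∈ Finset.Icc 1 T, (a τ) ^ 2 / (ε + b τ) ≤
      Real.log (1 + b T / ε) := by
    have hkey : ∀ k : ℕ, (a (k+1)) ^ 2 / (ε + b (k+1)) ≤
        Real.log (ε + b (k+1)) - Real.log (ε + b k) := by
      intro k
      have hdiff : (a (k+1)) ^ 2 ≤ b (k+1) - b k := by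
        have hsum : b (k+1) = b k + ∑ j ∈ Finset.Icc 1 (k+1), β₂ ^ (k+1-j) * (a j) ^ 2 := by
          rw [hb (k+1), hb k, Finset.sum_Icc_succ_top (Nat.le_add_left 1 k)]
        have hsingle : β₂ ^ (k+1-(k+1)) * (a (k+1)) ^ 2 ≤
            ∑ j ∈ Finset.Icc 1 (k+1), β₂ ^ (k+1-j) * (a j) ^ 2 :=
          Finset.single_le_sum (fun j _ => hterm (k+1) j)
            (Finset.mem_Icc.mpr ⟨Nat.le_add_left 1 k, le_refl _⟩)
        simp only [Nat.sub_self, pow_zero, one_mul] at hsingle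
        linarith
      have hx : (0:ℝ) < ε + b k := hpos k
      have hy : (0:ℝ) < ε + b (k+1) := hpos (k+1)
      have hxy : ε + b k ≤ ε + b (k+1) := by
        have := hbmono k (k+1) (Nat.le_succ k); linarith
      have hlog : Real.log ((ε + b k) / (ε + b (k+1))) ≤
          (ε + b k) / (ε + b (k+1)) - 1 :=
        Real.log_le_sub_one_of_pos (div_pos hx hy)
      rw [Real.log_div (ne_of_gt hx) (ne_of_gt hy)] at hlog
      have h1 : (a (k+1)) ^ 2 / (ε + b (k+1)) ≤ (b (k+1) - b k) / (ε + b (k+1)) := by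
        gcongr
      have h2 : (b (k+1) - b k) / (ε + b (k+1)) = 1 - (ε + b k) / (ε + b (k+1)) := by
        field_simp
        ring
      linarith [h1, hlog, h2]
    calc ∑ τ ∈ Finset.Icc 1 T, (a τ) ^ 2 / (ε + b τ)
        ≤ ∑ τ ∈ Finset.Icc 1 T, (Real.log (ε + b τ) - Real.log (ε + b (τ-1))) := by
          refine Finset.sum_le_sum fun τ hτ => ?_
          obtain ⟨h1τ, -⟩ := Finset.mem_Icc.mp hτ
          obtain ⟨k, rfl⟩ := Nat.exists_eq_add_of_le h1τ
          simpa [Nat.add_comm 1 k] using hkey k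
      _ = Real.log (ε + b T) - Real.log (ε + b 0) := by
          rw [← Finset.Ico_add_one_right_eq_Icc, Finset.sum_Ico_eq_sum_range]
          simp only [Nat.add_sub_cancel, Nat.add_sub_cancel_left, Nat.add_comm 1]
          exact Finset.sum_range_sub (fun i => Real.log (ε + b i)) T
      _ = Real.log (1 + b T / ε) := by
          rw [hb0, add_zero, ← Real.log_div (ne_of_gt (hpos T)) (ne_of_gt hε)]
          congr 1
          field_simp
      _ ≤ Real.log (1 + b T / ε) := le_refl _
  -- Step A : Cauchy–Schwarz on c t
  have stepA : ∀ t : ℕ, (c t) ^ 2 ≤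
      (1 / (1 - β₁)) * ∑ τ ∈ Finset.Icc 1 t, β₁ ^ (t - τ) * (a τ) ^ 2 := by
    intro t
    have hfg : ∀ τ, β₁ ^ (t - τ) * a τ =
        (Real.sqrt β₁ ^ (t - τ)) * (Real.sqrt β₁ ^ (t - τ) * a τ) := by
      intro τ
      rw [← mul_assoc, ← pow_add, ← two_mul, pow_mul, Real.sq_sqrt hβ₁0]
    have CS := Finset.sum_mul_sq_le_sq_mul_sq (Finset.Icc 1 t)
      (fun τ => Real.sqrt β₁ ^ (t - τ)) (fun τ => Real.sqrt β₁ ^ (t - τ) * a τ)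
    have hsq1 : ∀ τ : ℕ, (Real.sqrt β₁ ^ (t - τ)) ^ 2 = β₁ ^ (t - τ) := by
      intro τ; rw [← pow_mul, mul_comm, pow_mul, Real.sq_sqrt hβ₁0]
    have hsq2 : ∀ τ : ℕ, (Real.sqrt β₁ ^ (t - τ) * a τ) ^ 2 = β₁ ^ (t - τ) * (a τ) ^ 2 := by
      intro τ; rw [mul_pow, hsq1]
    rw [hc t]
    calc (∑ τ ∈ Finset.Icc 1 t, β₁ ^ (t - τ) * a τ) ^ 2
        = (∑ τ ∈ Finset.Icc 1 t,
            (Real.sqrt β₁ ^ (t - τ)) * (Real.sqrt β₁ ^ (t - τ) * a τ)) ^ 2 := by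
          congr 1; exact Finset.sum_congr rfl fun τ _ => hfg τ
      _ ≤ (∑ τ ∈ Finset.Icc 1 t, (Real.sqrt β₁ ^ (t - τ)) ^ 2) *
            ∑ τ ∈ Finset.Icc 1 t, (Real.sqrt β₁ ^ (t - τ) * a τ) ^ 2 := CS
      _ = (∑ τ ∈ Finset.Icc 1 t, β₁ ^ (t - τ)) *
            ∑ τ ∈ Finset.Icc 1 t, β₁ ^ (t - τ) * (a τ) ^ 2 := by
          rw [Finset.sum_congr rfl fun τ _ => hsq1 τ,
            Finset.sum_congr rfl fun τ _ => hsq2 τ]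
      _ ≤ (1 / (1 - β₁)) * ∑ τ ∈ Finset.Icc 1 t, β₁ ^ (t - τ) * (a τ) ^ 2 := by
          refine mul_le_mul_of_nonneg_right (sum_pow_sub_left β₁ hβ₁0 hβ₁1 1 t) ?_
          exact Finset.sum_nonneg fun τ _ =>
            mul_nonneg (pow_nonneg hβ₁0 _) (sq_nonneg _)
  -- main chain
  have h1inv : (0:ℝ) ≤ 1 / (1 - β₁) := by positivity
  calc ∑ t ∈ Finset.Icc 1 T, (c t) ^ 2 / (ε + b t)
      ≤ ∑ t ∈ Finset.Icc 1 T, (1 / (1 - β₁)) *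
          ∑ τ ∈ Finset.Icc 1 t, β₁ ^ (t - τ) * ((a τ) ^ 2 / (ε + b τ)) := by
        refine Finset.sum_le_sum fun t ht => ?_
        obtain ⟨-, htT⟩ := Finset.mem_Icc.mp ht
        have h1 : (c t) ^ 2 / (ε + b t) ≤
            ((1 / (1 - β₁)) * ∑ τ ∈ Finset.Icc 1 t, β₁ ^ (t - τ) * (a τ) ^ 2) / (ε + b t) :=
          div_le_div_of_nonneg_right (stepA t) (le_of_lt (hpos t))
        rw [mul_div_assoc, Finset.sum_div] at h1
        refine h1.trans (mul_le_mul_of_nonneg_left ?_ h1inv)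
        refine Finset.sum_le_sum fun τ hτ => ?_
        obtain ⟨-, hτt⟩ := Finset.mem_Icc.mp hτ
        rw [mul_div_assoc]
        refine mul_le_mul_of_nonneg_left ?_ (pow_nonneg hβ₁0 _)
        refine div_le_div_of_nonneg_left (sq_nonneg _) (hpos τ) ?_
        have := hbmono τ t hτt; linarith
    _ = (1 / (1 - β₁)) * ∑ t ∈ Finset.Icc 1 T,
          ∑ τ ∈ Finset.Icc 1 t, β₁ ^ (t - τ) * ((a τ) ^ 2 / (ε + b τ)) := by
        rw [Finset.mul_sum]
    _ = (1 / (1 - β₁)) * ∑ τ ∈ Finset.Icc 1 T,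
          ∑ t ∈ Finset.Icc τ T, β₁ ^ (t - τ) * ((a τ) ^ 2 / (ε + b τ)) := by
        rw [sum_Icc_Icc_comm' T (fun t τ => β₁ ^ (t - τ) * ((a τ) ^ 2 / (ε + b τ)))]
    _ ≤ (1 / (1 - β₁)) * ∑ τ ∈ Finset.Icc 1 T,
          (1 / (1 - β₁)) * ((a τ) ^ 2 / (ε + b τ)) := by
        refine mul_le_mul_of_nonneg_left (Finset.sum_le_sum fun τ _ => ?_) h1inv
        rw [← Finset.sum_mul]
        refine mul_le_mul_of_nonneg_right (sum_pow_sub_right β₁ hβ₁0 hβ₁1 τ T) ?_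
        exact div_nonneg (sq_nonneg _) (le_of_lt (hpos τ))
    _ = (1 / (1 - β₁) ^ 2) * ∑ τ ∈ Finset.Icc 1 T, (a τ) ^ 2 / (ε + b τ) := by
        rw [← Finset.mul_sum, ← mul_assoc]
        congr 1
        field_simp
    _ ≤ (1 / (1 - β₁) ^ 2) * Real.log (1 + b T / ε) := by
        refine mul_le_mul_of_nonneg_left stepE ?_
        positivity
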